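/- Let d be the set of continuous paths p : I → ℝ² that are finite concatenations of horizontal and vertical paths (i.e., concatenations of finitely many continuous paths each of which has constant first coordinate or constant second coordinate). Then (ℝ², d) is a d-space; for every open U ⊆ ℝ², every directed function c : U → I on U is locally constant; consequently every continuous path I → ℝ² is weakly directed, and (ℝ², d) is not saturated. -/

import Mathlib

open unitInterval Topology Set

/-- Concatenation of two continuous paths `p q : C(I, X)` with `p 1 = q 0`,
traversing `p` on `[0, 1/2]` and `q` on `[1/2, 1]` (both at double speed). -/
noncomputable def concatPath {X : Type*} [TopologicalSpace X]
    (p q : C(unitInterval, X)) (h : p 1 = q 0) : C(unitInterval, X) :=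
  ((⟨p, rfl, rfl⟩ : Path (p 0) (p 1)).trans
    ((⟨q, rfl, rfl⟩ : Path (q 0) (q 1)).cast h rfl)).toContinuousMap

/-- A d-space structure on a topological space `X`: a set of continuous paths
`I → X` containing the constant paths, closed under concatenation and under
precomposition with continuous non-decreasing maps `I → I`. -/
structure DSpace (X : Type*) [TopologicalSpace X] where
  d : Set C(unitInterval, X)
  const_mem : ∀ x : X, ContinuousMap.const unitInterval x ∈ d
  concat_mem : ∀ p ∈ d, ∀ q ∈ d, ∀ h : p 1 = q 0, concatPath p q h ∈ d
  reparam_mem : ∀ p ∈ d, ∀ φ : C(unitInterval, unitInterval), Monotone ⇑φ → p.comp φ ∈ d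

/-- `c` is a directed function on the (open) set `U` for the set of directed
paths `d`: it is continuous on `U` and non-decreasing along every directed path
with image contained in `U`. -/
def IsDirectedFn {X : Type*} [TopologicalSpace X] (d : Set C(unitInterval, X))
    (U : Set X) (c : X → unitInterval) : Prop :=
  ContinuousOn c U ∧ ∀ p ∈ d, Set.range ⇑p ⊆ U → Monotone (c ∘ ⇑p)

/-- A path `p` is weakly directed when, for every directed function `c` on an
open `U`, the map `c ∘ p` is locally non-decreasing on `p ⁻¹' U`. -/
def IsWeaklyDirected {X : Type*} [TopologicalSpace X] (d : Set C(unitInterval, X))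
    (p : C(unitInterval, X)) : Prop :=
  ∀ U : Set X, IsOpen U → ∀ c : X → unitInterval, IsDirectedFn d U c →
    ∀ t : unitInterval, p t ∈ U →
      ∃ V ∈ 𝓝 t, V ⊆ ⇑p ⁻¹' U ∧ MonotoneOn (c ∘ ⇑p) V

/-- The set `d̂X` of weakly directed paths. -/
def satPaths {X : Type*} [TopologicalSpace X] (d : Set C(unitInterval, X)) :
    Set C(unitInterval, X) :=
  {p | IsWeaklyDirected d p}

/-- A set of directed paths is saturated when every weakly directed path is directed. -/
def IsSaturated {X : Type*} [TopologicalSpace X] (d : Set C(unitInterval, X)) : Prop :=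
  satPaths d = d

/-- `p` is a finite concatenation of horizontal and vertical paths: there is a
monotone partition `0 = τ 0 ≤ … ≤ τ n = 1` of `I` such that on each subinterval
`[τ i, τ (i+1)]`, either the first or the second coordinate of `p` is constant. -/
def IsPiecewiseHV (p : C(unitInterval, ℝ × ℝ)) : Prop :=
  ∃ n : ℕ, ∃ τ : Fin (n + 1) → unitInterval, Monotone τ ∧ τ 0 = 0 ∧ τ (Fin.last n) = 1 ∧
    ∀ i : Fin n,
      (∀ s ∈ Set.Icc (τ i.castSucc) (τ i.succ), (p s).1 = (p (τ i.castSucc)).1) ∨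
      (∀ s ∈ Set.Icc (τ i.castSucc) (τ i.succ), (p s).2 = (p (τ i.castSucc)).2)

/-- The plane with piecewise horizontal-or-vertical directed paths. -/
def dHV : Set C(unitInterval, ℝ × ℝ) := {p | IsPiecewiseHV p}

section Aux

set_option maxHeartbeats 1000000

lemma concatPath_left {X : Type*} [TopologicalSpace X]
    (p q : C(unitInterval, X)) (h : p 1 = q 0) (t : unitInterval) (ht : (t:ℝ) ≤ 1/2) :
    concatPath p q h t = p ⟨2*t, ⟨by linarith [t.2.1], by linarith⟩⟩ := by
  simp only [concatPath, Path.coe_toContinuousMap, Path.trans_apply, ht, dif_pos]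
  rfl

lemma concatPath_right {X : Type*} [TopologicalSpace X]
    (p q : C(unitInterval, X)) (h : p 1 = q 0) (t : unitInterval) (ht : 1/2 ≤ (t:ℝ)) :
    concatPath p q h t = q ⟨2*t - 1, ⟨by linarith, by linarith [t.2.2]⟩⟩ := by
  rcases le_or_gt (t:ℝ) (1/2) with h' | h'
  · have heq : (t:ℝ) = 1/2 := le_antisymm h' ht
    rw [concatPath_left p q h t h']
    have e1 : (⟨2*(t:ℝ), ⟨by linarith [t.2.1], by linarith⟩⟩ : unitInterval) = 1 := by
      ext; simp [heq]
    have e2 : (⟨2*(t:ℝ)-1, ⟨by linarith, by linarith [t.2.2]⟩⟩ : unitInterval) = 0 := by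
      ext; simp [heq]
    rw [e1, e2, h]
  · simp only [concatPath, Path.coe_toContinuousMap, Path.trans_apply, not_le.mpr h', dif_neg,
      not_le]
    rfl

lemma whole_hv (p : C(unitInterval, ℝ × ℝ))
    (h : (∀ s : unitInterval, (p s).1 = (p 0).1) ∨ (∀ s : unitInterval, (p s).2 = (p 0).2)) :
    p ∈ dHV := by
  refine ⟨1, ![0, 1], ?_, rfl, rfl, ?_⟩
  · intro a b hab
    fin_cases a <;> fin_cases b <;>
      simp_all [Fin.le_def, Subtype.coe_le_coe]
  · intro i
    fin_cases i
    rcases h with h | h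
    · left; intro s _; simp only [Fin.castSucc, Matrix.cons_val_zero]
      rw [h s, h 0]
      rfl
    · right; intro s _; simp only [Fin.castSucc, Matrix.cons_val_zero]
      rw [h s, h 0]
      rfl

lemma const_hv (x : ℝ × ℝ) : ContinuousMap.const unitInterval x ∈ dHV :=
  whole_hv _ (Or.inl fun s => rfl)

lemma concat_hv : ∀ p ∈ dHV, ∀ q ∈ dHV, ∀ h : p 1 = q 0, concatPath p q h ∈ dHV := by
  rintro p ⟨n, τp, hmp, h0p, h1p, hp⟩ q ⟨m, τq, hmq, h0q, h1q, hq⟩ h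
  -- rule out degenerate n = 0, m = 0
  rcases n with _ | n
  · exfalso
    have h01 : (0 : unitInterval) = 1 := by rw [← h0p, ← h1p, Fin.last_zero]
    exact zero_ne_one (Subtype.ext_iff.mp h01)
  rcases m with _ | m
  · exfalso
    have h01 : (0 : unitInterval) = 1 := by rw [← h0q, ← h1q, Fin.last_zero]
    exact zero_ne_one (Subtype.ext_iff.mp h01)
  classical
  -- the real-valued partition
  set N := (n + 1) + (m + 1) with hN
  obtain ⟨g, hgleft, hgright', hgtop⟩ :
      ∃ g : ℕ → ℝ, (∀ k (hk : k ≤ n + 1), g k = (τp ⟨k, by omega⟩ : ℝ)/2) ∧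
        (∀ k (hk1 : n + 1 < k) (hk2 : k ≤ N), g k = ((τq ⟨k - (n+1), by omega⟩ : ℝ) + 1)/2) ∧
        (∀ k, N < k → g k = 1) := by
    classical
    refine ⟨fun k =>
      if hk : k ≤ n + 1 then (τp ⟨k, by omega⟩ : ℝ)/2
      else if hk2 : k ≤ N then ((τq ⟨k - (n+1), by omega⟩ : ℝ) + 1)/2
      else 1, ?_, ?_, ?_⟩
    · intro k hk; beta_reduce; rw [dif_pos hk]
    · intro k hk1 hk2; beta_reduce; rw [dif_neg (by omega), dif_pos hk2]
    · intro k hk; beta_reduce; rw [dif_neg (by omega), dif_neg (by omega)]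
  have hgright : ∀ k (hk1 : n + 1 ≤ k) (hk2 : k ≤ N), g k = ((τq ⟨k - (n+1), by omega⟩ : ℝ) + 1)/2 := by
    intro k hk1 hk2
    rcases eq_or_lt_of_le hk1 with rfl | hlt
    · rw [hgleft _ le_rfl]
      have h1 : (⟨n+1, by omega⟩ : Fin (n+1+1)) = Fin.last (n+1) := rfl
      rw [h1, h1p]
      have e0 : (⟨n+1-(n+1), by omega⟩ : Fin (m+1+1)) = 0 := by
        apply Fin.ext; simp
      rw [e0, h0q]
      norm_num
    · exact hgright' k hlt hk2
  have hgright2 : ∀ k (hk1 : n + 1 ≤ k) (hk2 : k ≤ N) (j : ℕ) (hj : j < m + 2)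
      (he : k - (n+1) = j), g k = ((τq ⟨j, hj⟩ : ℝ) + 1)/2 := by
    intro k hk1 hk2 j hj he
    subst he
    exact hgright k hk1 hk2
  have hmem : ∀ k, g k ∈ Set.Icc (0:ℝ) 1 := by
    intro k
    rcases le_or_gt k (n+1) with hk | hk
    · rw [hgleft k hk]; have := (τp ⟨k, by omega⟩).2; constructor <;> [linarith [this.1]; linarith [this.2]]
    · rcases le_or_gt k N with hk2 | hk2
      · rw [hgright k (by omega) hk2]
        have := (τq ⟨k - (n+1), by omega⟩).2
        constructor <;> [linarith [this.1]; linarith [this.2]]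
      · rw [hgtop k hk2]; norm_num
  have hgmono : Monotone g := by
    apply monotone_nat_of_le_succ
    intro k
    rcases le_or_gt (k+1) (n+1) with hk | hk
    · rw [hgleft k (by omega), hgleft (k+1) hk]
      have : τp ⟨k, by omega⟩ ≤ τp ⟨k+1, by omega⟩ := hmp (by simp [Fin.le_def])
      have := Subtype.coe_le_coe.mpr this
      linarith
    · rcases le_or_gt (k+1) N with hk2 | hk2
      · rw [hgright (k+1) (by omega) hk2]
        rcases le_or_gt k (n+1) with hk3 | hk3
        · rw [hgleft k hk3]
          have h1 := (τp ⟨k, by omega⟩).2.2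
          have h2 := (τq ⟨k+1-(n+1), by omega⟩).2.1
          linarith
        · rw [hgright k (by omega) (by omega)]
          have : τq ⟨k - (n+1), by omega⟩ ≤ τq ⟨k+1-(n+1), by omega⟩ := hmq (by simp [Fin.le_def]; omega)
          have := Subtype.coe_le_coe.mpr this
          linarith
      · rw [hgtop (k+1) (by omega)]
        exact (hmem k).2
  refine ⟨N, fun j => ⟨g j.val, hmem j.val⟩, ?_, ?_, ?_, ?_⟩
  · intro a b hab
    exact Subtype.mk_le_mk.mpr (hgmono hab)
  · ext
    show g 0 = 0
    rw [hgleft 0 (by omega)]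
    have : (⟨0, by omega⟩ : Fin (n+1+1)) = 0 := rfl
    rw [this, h0p]; norm_num
  · ext
    show g N = 1
    rw [hgright N (by omega) le_rfl]
    have : (⟨N - (n+1), by omega⟩ : Fin (m+1+1)) = Fin.last (m+1) := by ext; simp [hN]
    rw [this, h1q]; norm_num
  · intro i
    simp only [Fin.coe_castSucc, Fin.val_succ]
    rcases lt_or_ge i.val (n+1) with hi | hi
    · -- left half: comes from p
      have ha : g i.val = (τp ⟨i.val, by omega⟩ : ℝ)/2 := hgleft _ (by omega)
      have hb : g (i.val+1) = (τp ⟨i.val+1, by omega⟩ : ℝ)/2 := hgleft _ hi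
      have key : ∀ s : unitInterval, (g i.val ≤ (s:ℝ)) → ((s:ℝ) ≤ g (i.val+1)) →
          ∃ hm2 : 2*(s:ℝ) ∈ I, concatPath p q h s = p ⟨2*s, hm2⟩ ∧
            (⟨2*(s:ℝ), hm2⟩ : unitInterval) ∈ Set.Icc (τp ⟨i.val, by omega⟩) (τp ⟨i.val+1, by omega⟩) := by
        intro s hs1 hs2
        rw [ha] at hs1; rw [hb] at hs2
        have ht2 := (τp ⟨i.val+1, by omega⟩).2.2
        have ht1 := (τp ⟨i.val, by omega⟩).2.1
        have hhalf : (s:ℝ) ≤ 1/2 := by linarith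
        refine ⟨⟨by linarith [s.2.1], by linarith⟩, concatPath_left p q h s hhalf, ?_, ?_⟩
        · exact Subtype.mk_le_mk.mpr (by linarith)
        · exact Subtype.mk_le_mk.mpr (by linarith)
      have hanchor : concatPath p q h ⟨g i.val, hmem _⟩ = p (τp ⟨i.val, by omega⟩) := by
        obtain ⟨hm2, heval, _⟩ := key ⟨g i.val, hmem _⟩ le_rfl (hgmono (by omega))
        rw [heval]
        congr 1
        apply Subtype.ext
        show 2 * g i.val = (τp ⟨i.val, by omega⟩ : ℝ)
        rw [ha]; ring
      rcases hp ⟨i.val, by omega⟩ with hcase | hcase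
      · left
        intro s hs
        obtain ⟨hs1, hs2⟩ := Set.mem_Icc.mp hs
        obtain ⟨hm2, heval, hicc⟩ := key s hs1 hs2
        have hmem2 : (⟨2*(s:ℝ), hm2⟩ : unitInterval) ∈ Set.Icc
            (τp (⟨i.val, by omega⟩ : Fin (n+1)).castSucc) (τp (⟨i.val, by omega⟩ : Fin (n+1)).succ) := hicc
        have hmid : ((p ⟨2*(s:ℝ), hm2⟩ : ℝ × ℝ)).1 = ((p (τp ⟨i.val, by omega⟩) : ℝ × ℝ)).1 :=
          hcase ⟨2*(s:ℝ), hm2⟩ hmem2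
        exact (congrArg Prod.fst heval).trans
          (hmid.trans (congrArg Prod.fst hanchor).symm)
      · right
        intro s hs
        obtain ⟨hs1, hs2⟩ := Set.mem_Icc.mp hs
        obtain ⟨hm2, heval, hicc⟩ := key s hs1 hs2
        have hmem2 : (⟨2*(s:ℝ), hm2⟩ : unitInterval) ∈ Set.Icc
            (τp (⟨i.val, by omega⟩ : Fin (n+1)).castSucc) (τp (⟨i.val, by omega⟩ : Fin (n+1)).succ) := hicc
        have hmid : ((p ⟨2*(s:ℝ), hm2⟩ : ℝ × ℝ)).2 = ((p (τp ⟨i.val, by omega⟩) : ℝ × ℝ)).2 :=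
          hcase ⟨2*(s:ℝ), hm2⟩ hmem2
        exact (congrArg Prod.snd heval).trans
          (hmid.trans (congrArg Prod.snd hanchor).symm)
    · -- right half: comes from q
      have hiN : i.val < N := i.isLt
      obtain ⟨j, hjm, hij⟩ : ∃ j, j < m + 1 ∧ i.val = (n+1) + j :=
        ⟨i.val - (n+1), by omega, by omega⟩
      have ha : g i.val = ((τq ⟨j, by omega⟩ : ℝ) + 1)/2 :=
        hgright2 _ hi (by omega) j (by omega) (by omega)
      have hb : g (i.val+1) = ((τq ⟨j+1, by omega⟩ : ℝ) + 1)/2 :=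
        hgright2 _ (by omega) (by omega) (j+1) (by omega) (by omega)
      have key : ∀ s : unitInterval, (g i.val ≤ (s:ℝ)) → ((s:ℝ) ≤ g (i.val+1)) →
          ∃ hm2 : 2*(s:ℝ) - 1 ∈ I, concatPath p q h s = q ⟨2*s - 1, hm2⟩ ∧
            (⟨2*(s:ℝ) - 1, hm2⟩ : unitInterval) ∈ Set.Icc (τq ⟨j, by omega⟩) (τq ⟨j+1, by omega⟩) := by
        intro s hs1 hs2
        rw [ha] at hs1; rw [hb] at hs2
        have ht1 := (τq ⟨j, by omega⟩).2.1
        have ht2 := (τq ⟨j+1, by omega⟩).2.2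
        have hhalf : 1/2 ≤ (s:ℝ) := by linarith
        refine ⟨⟨by linarith, by linarith [s.2.2]⟩, concatPath_right p q h s hhalf, ?_, ?_⟩
        · exact Subtype.mk_le_mk.mpr (by linarith)
        · exact Subtype.mk_le_mk.mpr (by linarith)
      have hanchor : concatPath p q h ⟨g i.val, hmem _⟩ = q (τq ⟨j, by omega⟩) := by
        obtain ⟨hm2, heval, _⟩ := key ⟨g i.val, hmem _⟩ le_rfl (hgmono (by omega))
        rw [heval]
        congr 1
        apply Subtype.ext
        show 2 * g i.val - 1 = (τq ⟨j, by omega⟩ : ℝ)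
        rw [ha]; ring
      rcases hq ⟨j, by omega⟩ with hcase | hcase
      · left
        intro s hs
        obtain ⟨hs1, hs2⟩ := Set.mem_Icc.mp hs
        obtain ⟨hm2, heval, hicc⟩ := key s hs1 hs2
        have hmem2 : (⟨2*(s:ℝ) - 1, hm2⟩ : unitInterval) ∈ Set.Icc
            (τq (⟨j, by omega⟩ : Fin (m+1)).castSucc) (τq (⟨j, by omega⟩ : Fin (m+1)).succ) := hicc
        have hmid : ((q ⟨2*(s:ℝ) - 1, hm2⟩ : ℝ × ℝ)).1 = ((q (τq ⟨j, by omega⟩) : ℝ × ℝ)).1 :=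
          hcase ⟨2*(s:ℝ) - 1, hm2⟩ hmem2
        exact (congrArg Prod.fst heval).trans
          (hmid.trans (congrArg Prod.fst hanchor).symm)
      · right
        intro s hs
        obtain ⟨hs1, hs2⟩ := Set.mem_Icc.mp hs
        obtain ⟨hm2, heval, hicc⟩ := key s hs1 hs2
        have hmem2 : (⟨2*(s:ℝ) - 1, hm2⟩ : unitInterval) ∈ Set.Icc
            (τq (⟨j, by omega⟩ : Fin (m+1)).castSucc) (τq (⟨j, by omega⟩ : Fin (m+1)).succ) := hicc
        have hmid : ((q ⟨2*(s:ℝ) - 1, hm2⟩ : ℝ × ℝ)).2 = ((q (τq ⟨j, by omega⟩) : ℝ × ℝ)).2 :=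
          hcase ⟨2*(s:ℝ) - 1, hm2⟩ hmem2
        exact (congrArg Prod.snd heval).trans
          (hmid.trans (congrArg Prod.snd hanchor).symm)

@[reducible]
noncomputable def iCCLO : ConditionallyCompleteLinearOrder unitInterval :=
  have : Inhabited unitInterval := ⟨0⟩
  ordConnectedSubsetConditionallyCompleteLinearOrder unitInterval

lemma reparam_hv : ∀ p ∈ dHV, ∀ φ : C(unitInterval, unitInterval), Monotone ⇑φ →
    p.comp φ ∈ dHV := by
  letI := iCCLO
  classical
  rintro p ⟨n, τ, hmono, h0, h1, hHV⟩ φ hφ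
  -- the "first hitting time" of level τ k
  obtain ⟨g, hgle, hgtop⟩ :
      ∃ g : ℕ → unitInterval,
        (∀ k (hk : k ≤ n), g k = if hne : {t | τ ⟨k, by omega⟩ ≤ φ t}.Nonempty
          then sInf {t | τ ⟨k, by omega⟩ ≤ φ t} else 1) ∧
        (∀ k, n < k → g k = 1) := by
    refine ⟨fun k => if hk : k ≤ n then
        (if hne : {t | τ ⟨k, by omega⟩ ≤ φ t}.Nonempty
          then sInf {t | τ ⟨k, by omega⟩ ≤ φ t} else 1) else 1, ?_, ?_⟩
    · intro k hk; beta_reduce; rw [dif_pos hk]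
    · intro k hk; beta_reduce; rw [dif_neg (by omega)]
  have hbdd : ∀ S : Set unitInterval, BddBelow S :=
    fun S => ⟨0, fun x _ => x.2.1⟩
  have hTclosed : ∀ k (hk : k ≤ n), IsClosed {t | τ (⟨k, by omega⟩ : Fin (n+1)) ≤ φ t} :=
    fun k hk => isClosed_le continuous_const φ.continuous
  -- membership of the infimum
  have hgmem : ∀ k (hk : k ≤ n), ({t | τ ⟨k, by omega⟩ ≤ φ t}.Nonempty) →
      τ (⟨k, by omega⟩ : Fin (n+1)) ≤ φ (g k) := by
    intro k hk hne
    rw [hgle k hk, dif_pos hne]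
    exact ((hTclosed k hk).csInf_mem hne (hbdd _))
  have hgleset : ∀ k (hk : k ≤ n), ∀ t, τ (⟨k, by omega⟩ : Fin (n+1)) ≤ φ t → g k ≤ t := by
    intro k hk t ht
    rw [hgle k hk]
    have hne : {t | τ (⟨k, by omega⟩ : Fin (n+1)) ≤ φ t}.Nonempty := ⟨t, ht⟩
    rw [dif_pos hne]
    exact csInf_le (hbdd _) ht
  have hgempty : ∀ k (hk : k ≤ n), ¬ ({t | τ ⟨k, by omega⟩ ≤ φ t}.Nonempty) → g k = 1 := by
    intro k hk hne
    rw [hgle k hk, dif_neg hne]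
  have hgmono : ∀ k k', k ≤ k' → g k ≤ g k' := by
    intro k k' hkk
    rcases le_or_gt k' n with hk' | hk'
    · have hk : k ≤ n := le_trans hkk hk'
      have hsub : {t | τ (⟨k', by omega⟩ : Fin (n+1)) ≤ φ t} ⊆
          {t | τ (⟨k, by omega⟩ : Fin (n+1)) ≤ φ t} := by
        intro t ht
        exact le_trans (hmono (by simp [Fin.le_def]; omega)) ht
      by_cases hne' : {t | τ (⟨k', by omega⟩ : Fin (n+1)) ≤ φ t}.Nonempty
      · rw [hgle k hk, hgle k' hk', dif_pos hne', dif_pos (hne'.mono hsub)]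
        exact csInf_le_csInf (hbdd _) hne' hsub
      · rw [hgle k' hk', dif_neg hne']
        exact le_one'
    · rw [hgtop k' hk']
      exact le_one'
  refine ⟨n + 1, fun j => g j.val, ?_, ?_, ?_, ?_⟩
  · intro a b hab
    exact hgmono _ _ hab
  · show g 0 = 0
    have h00 : (⟨0, by omega⟩ : Fin (n+1)) = 0 := rfl
    have hne : {t | τ (⟨0, by omega⟩ : Fin (n+1)) ≤ φ t}.Nonempty :=
      ⟨0, by rw [h00, h0]; exact nonneg'⟩
    refine le_antisymm ?_ nonneg'
    exact hgleset 0 (by omega) 0 (by rw [h00, h0]; exact nonneg')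
  · show g (n+1) = 1
    exact hgtop _ (by omega)
  · intro i
    simp only [Fin.coe_castSucc, Fin.val_succ]
    set k := i.val with hk
    have hkn : k ≤ n := by omega
    rcases eq_or_lt_of_le (hgmono k (k+1) (by omega)) with heq | hab
    · -- degenerate piece
      left
      intro s hs
      have h1s : g k ≤ s := hs.1
      have h2s : s ≤ g (k+1) := hs.2
      have : s = g k := le_antisymm (heq ▸ h2s) h1s
      rw [this]
    · -- nondegenerate piece
      have hTne : {t | τ (⟨k, by omega⟩ : Fin (n+1)) ≤ φ t}.Nonempty := by
        by_contra hne
        rw [hgempty k hkn hne] at hab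
        exact absurd (le_one' : g (k+1) ≤ 1) (not_le.mpr hab)
      have hlow : ∀ s : unitInterval, g k ≤ s → τ (⟨k, by omega⟩ : Fin (n+1)) ≤ φ s :=
        fun s hs => le_trans (hgmem k hkn hTne) (hφ hs)
      rcases eq_or_lt_of_le hkn with hkeq | hklt
      · -- last piece : φ is constantly 1 there
        left
        intro s hs
        have hfs : φ s = 1 := by
          refine le_antisymm le_one' ?_
          have : τ (⟨k, by omega⟩ : Fin (n+1)) = 1 := by
            have : (⟨k, by omega⟩ : Fin (n+1)) = Fin.last n := by
              apply Fin.ext; simp [hkeq]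
            rw [this, h1]
          exact this ▸ hlow s hs.1
        have hfa : φ (g k) = 1 := by
          refine le_antisymm le_one' ?_
          have : τ (⟨k, by omega⟩ : Fin (n+1)) = 1 := by
            have : (⟨k, by omega⟩ : Fin (n+1)) = Fin.last n := by
              apply Fin.ext; simp [hkeq]
            rw [this, h1]
          exact this ▸ hlow (g k) le_rfl
        simp only [ContinuousMap.comp_apply]
        rw [hfs, hfa]
      · -- interior piece : φ maps into [τ k, τ (k+1)]
        have hup : ∀ s : unitInterval, s ≤ g (k+1) → φ s ≤ τ (⟨k+1, by omega⟩ : Fin (n+1)) := by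
          intro s hsb
          by_contra hgt
          push_neg at hgt
          have hsb' : s = g (k+1) :=
            le_antisymm hsb (hgleset (k+1) (by omega) s (le_of_lt hgt))
          rw [hsb'] at hgt
          have hfa : φ (g k) ≤ τ (⟨k+1, by omega⟩ : Fin (n+1)) := by
            by_contra hfa
            push_neg at hfa
            exact absurd (hgleset (k+1) (by omega) (g k) (le_of_lt hfa)) (not_le.mpr hab)
          obtain ⟨t', ht'mem, ht'⟩ := intermediate_value_Icc (le_of_lt hab)
            φ.continuous.continuousOn ⟨hfa, le_of_lt hgt⟩
          have hbt : g (k+1) ≤ t' := hgleset (k+1) (by omega) t' (le_of_eq ht'.symm)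
          have : t' = g (k+1) := le_antisymm ht'mem.2 hbt
          rw [this] at ht'
          exact absurd ht' (ne_of_gt hgt)
        have hicc : ∀ s : unitInterval, s ∈ Set.Icc (g k) (g (k+1)) →
            φ s ∈ Set.Icc (τ ((⟨k, hklt⟩ : Fin n).castSucc)) (τ ((⟨k, hklt⟩ : Fin n).succ)) := by
          intro s hs
          have e1 : (⟨k, hklt⟩ : Fin n).castSucc = (⟨k, by omega⟩ : Fin (n+1)) := rfl
          have e2 : (⟨k, hklt⟩ : Fin n).succ = (⟨k+1, by omega⟩ : Fin (n+1)) := rfl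
          rw [e1, e2]
          exact ⟨hlow s hs.1, hup s hs.2⟩
        have hmem0 : g k ∈ Set.Icc (g k) (g (k+1)) := ⟨le_rfl, le_of_lt hab⟩
        rcases hHV ⟨k, hklt⟩ with hcase | hcase
        · left
          intro s hs
          simp only [ContinuousMap.comp_apply]
          rw [hcase (φ s) (hicc s hs), hcase (φ (g k)) (hicc _ hmem0)]
        · right
          intro s hs
          simp only [ContinuousMap.comp_apply]
          rw [hcase (φ s) (hicc s hs), hcase (φ (g k)) (hicc _ hmem0)]

/-- The affine segment from `a` to `b` as a continuous map on `I`. -/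
noncomputable def seg (a b : ℝ × ℝ) : C(unitInterval, ℝ × ℝ) :=
  ⟨fun t => (1 - (t:ℝ)) • a + (t:ℝ) • b,
    ((continuous_const.sub continuous_subtype_val).smul continuous_const).add
      (continuous_subtype_val.smul continuous_const)⟩

lemma seg_zero (a b : ℝ × ℝ) : seg a b 0 = a := by simp [seg]
lemma seg_one (a b : ℝ × ℝ) : seg a b 1 = b := by simp [seg]

lemma seg_mem_dHV (a b : ℝ × ℝ) (h : a.1 = b.1 ∨ a.2 = b.2) : seg a b ∈ dHV := by
  apply whole_hv
  rcases h with h | h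
  · left
    intro s
    show ((1 - (s:ℝ)) • a + (s:ℝ) • b).1 = ((1 - ((0:unitInterval):ℝ)) • a + ((0:unitInterval):ℝ) • b).1
    simp only [Prod.fst_add, Prod.smul_fst, smul_eq_mul, Set.Icc.coe_zero]
    rw [← h]; ring
  · right
    intro s
    show ((1 - (s:ℝ)) • a + (s:ℝ) • b).2 = ((1 - ((0:unitInterval):ℝ)) • a + ((0:unitInterval):ℝ) • b).2
    simp only [Prod.snd_add, Prod.smul_snd, smul_eq_mul, Set.Icc.coe_zero]
    rw [← h]; ring

lemma seg_range_subset {x : ℝ × ℝ} {r : ℝ} {a b : ℝ × ℝ}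
    (ha : a ∈ Metric.ball x r) (hb : b ∈ Metric.ball x r) :
    Set.range ⇑(seg a b) ⊆ Metric.ball x r := by
  rintro _ ⟨t, rfl⟩
  exact (convex_ball x r) ha hb (by linarith [t.2.2]) t.2.1 (by ring)

lemma dirfn_locally_const : ∀ U : Set (ℝ × ℝ), IsOpen U →
    ∀ c : ℝ × ℝ → unitInterval, IsDirectedFn dHV U c →
    ∀ x ∈ U, ∃ V ∈ 𝓝 x, V ⊆ U ∧ ∀ y ∈ V, c y = c x := by
  intro U hU c hc x hx
  obtain ⟨r, hr, hball⟩ := Metric.isOpen_iff.mp hU x hx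
  refine ⟨Metric.ball x r, Metric.ball_mem_nhds x hr, hball, ?_⟩
  have step : ∀ a b : ℝ × ℝ, a ∈ Metric.ball x r → b ∈ Metric.ball x r →
      (a.1 = b.1 ∨ a.2 = b.2) → c a ≤ c b := by
    intro a b ha hb hab
    have hmem := seg_mem_dHV a b hab
    have hrange : Set.range ⇑(seg a b) ⊆ U := (seg_range_subset ha hb).trans hball
    have hmono := hc.2 (seg a b) hmem hrange
    have h01 : (0 : unitInterval) ≤ 1 := nonneg'
    have := hmono h01
    simpa [seg_zero, seg_one] using this
  have heq : ∀ a b : ℝ × ℝ, a ∈ Metric.ball x r → b ∈ Metric.ball x r →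
      (a.1 = b.1 ∨ a.2 = b.2) → c a = c b := by
    intro a b ha hb hab
    exact le_antisymm (step a b ha hb hab) (step b a hb ha (hab.imp Eq.symm Eq.symm))
  intro y hy
  have hyx := Metric.mem_ball.mp hy
  rw [Prod.dist_eq] at hyx
  have h1 : dist y.1 x.1 < r := lt_of_le_of_lt (le_max_left _ _) hyx
  have h2 : dist y.2 x.2 < r := lt_of_le_of_lt (le_max_right _ _) hyx
  have hz : (y.1, x.2) ∈ Metric.ball x r := by
    rw [Metric.mem_ball, Prod.dist_eq]
    simp only [dist_self]
    exact max_lt h1 hr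
  calc c y = c (y.1, x.2) := heq _ _ hy hz (Or.inl rfl)
    _ = c x := heq _ _ hz (Metric.mem_ball_self hr) (Or.inr rfl)

lemma all_weakly_directed : ∀ p : C(unitInterval, ℝ × ℝ), IsWeaklyDirected dHV p := by
  intro p U hU c hc t ht
  obtain ⟨V', hV'nhds, hV'sub, hV'const⟩ := dirfn_locally_const U hU c hc (p t) ht
  refine ⟨⇑p ⁻¹' V', p.continuous.continuousAt.preimage_mem_nhds hV'nhds, fun s hs => hV'sub hs, ?_⟩
  intro u hu v hv _
  show c (p u) ≤ c (p v)
  rw [hV'const (p u) hu, hV'const (p v) hv]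

lemma diag_not_hv : ContinuousMap.mk (fun t : unitInterval => ((t:ℝ), (t:ℝ)))
    (continuous_subtype_val.prodMk continuous_subtype_val) ∉ dHV := by
  rintro ⟨n, τ, hmono, h0, h1, hHV⟩
  have hex : ∃ i : Fin n, τ i.castSucc < τ i.succ := by
    by_contra hno
    push_neg at hno
    have hle : ∀ k : Fin (n+1), τ k ≤ τ 0 := by
      intro k
      induction k using Fin.induction with
      | zero => exact le_rfl
      | succ i ih => exact le_trans (hno i) ih
    have := hle (Fin.last n)
    rw [h0, h1] at this
    exact absurd this (not_le.mpr (Subtype.mk_lt_mk.mpr zero_lt_one))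
  obtain ⟨i, hi⟩ := hex
  have hmem : τ i.succ ∈ Set.Icc (τ i.castSucc) (τ i.succ) := ⟨le_of_lt hi, le_rfl⟩
  have hco : ((τ i.castSucc) : ℝ) < ((τ i.succ) : ℝ) := hi
  rcases hHV i with hcase | hcase
  · exact absurd (hcase (τ i.succ) hmem) (ne_of_gt hco)
  · exact absurd (hcase (τ i.succ) hmem) (ne_of_gt hco)

lemma not_saturated : ¬ IsSaturated dHV := by
  intro h
  have hdiag : (ContinuousMap.mk (fun t : unitInterval => ((t:ℝ), (t:ℝ)))
      (continuous_subtype_val.prodMk continuous_subtype_val)) ∈ satPaths dHV :=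
    all_weakly_directed _
  rw [h] at hdiag
  exact diag_not_hv hdiag

end Aux

/-- `(ℝ², dHV)` is a d-space; its directed functions on any open `U` are locally
constant; consequently every continuous path is weakly directed, and `(ℝ², dHV)`
is not saturated. -/
theorem stmt_12 :
    (∀ x : ℝ × ℝ, ContinuousMap.const unitInterval x ∈ dHV) ∧
    (∀ p ∈ dHV, ∀ q ∈ dHV, ∀ h : p 1 = q 0, concatPath p q h ∈ dHV) ∧
    (∀ p ∈ dHV, ∀ φ : C(unitInterval, unitInterval), Monotone ⇑φ → p.comp φ ∈ dHV) ∧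
    (∀ U : Set (ℝ × ℝ), IsOpen U → ∀ c : ℝ × ℝ → unitInterval, IsDirectedFn dHV U c →
      ∀ x ∈ U, ∃ V ∈ 𝓝 x, V ⊆ U ∧ ∀ y ∈ V, c y = c x) ∧
    (∀ p : C(unitInterval, ℝ × ℝ), IsWeaklyDirected dHV p) ∧
    ¬ IsSaturated dHV := by
  exact ⟨const_hv, concat_hv, reparam_hv, dirfn_locally_const, all_weakly_directed,
    not_saturated⟩
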